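/- Let X be a first-countable T0 space such that for every nonempty compact saturated subset K of X, the set min(K) of minimal elements of K (with respect to the specialization order) is countable. Then the Smyth power space P_S(X) is first-countable. -/

import Mathlib

open Set Topology

universe u

variable {X : Type u}

/-- Specialization order: `x ≤ y` iff `x ∈ closure {y}`. -/
def specLE [TopologicalSpace X] (x y : X) : Prop := x ∈ closure ({y} : Set X)

/-- Directed subset w.r.t. the specialization order. -/
def dirOn [TopologicalSpace X] (D : Set X) : Prop :=
  D.Nonempty ∧ ∀ a ∈ D, ∀ b ∈ D, ∃ c ∈ D, specLE a c ∧ specLE b c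

/-- Downward closure w.r.t. the specialization order. -/
def dClo [TopologicalSpace X] (A : Set X) : Set X := {x | ∃ a ∈ A, specLE x a}

/-- Upward closure w.r.t. the specialization order. -/
def uClo [TopologicalSpace X] (A : Set X) : Set X := {x | ∃ a ∈ A, specLE a x}

/-- `x` is a supremum of `D` w.r.t. the specialization order. -/
def IsSupOf [TopologicalSpace X] (D : Set X) (x : X) : Prop :=
  (∀ d ∈ D, specLE d x) ∧ ∀ y, (∀ d ∈ D, specLE d y) → specLE x y

/-- A d-space: a T0 space in which every directed set (for the specialization order)
has a supremum, and every open set is inaccessible by directed suprema. -/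
def IsDSpace (X : Type u) [TopologicalSpace X] : Prop :=
  T0Space X ∧ (∀ D : Set X, dirOn D → ∃ x, IsSupOf D x) ∧
    ∀ D : Set X, dirOn D → ∀ x, IsSupOf D x →
      ∀ U : Set X, IsOpen U → x ∈ U → (D ∩ U).Nonempty

/-- A set is saturated if it is the intersection of the open sets containing it. -/
def IsSat [TopologicalSpace X] (A : Set X) : Prop :=
  A = ⋂₀ {U : Set X | IsOpen U ∧ A ⊆ U}

/-- The collection of nonempty compact saturated subsets. -/
def KSet (X : Type u) [TopologicalSpace X] : Set (Set X) :=
  {K | K.Nonempty ∧ IsCompact K ∧ IsSat K}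

/-- A filtered family of sets: nonempty, and every two members contain a common member. -/
def FiltFam [TopologicalSpace X] (𝒦 : Set (Set X)) : Prop :=
  𝒦.Nonempty ∧ ∀ K₁ ∈ 𝒦, ∀ K₂ ∈ 𝒦, ∃ K₃ ∈ 𝒦, K₃ ⊆ K₁ ∧ K₃ ⊆ K₂

/-- Well-filtered space. -/
def IsWF (X : Type u) [TopologicalSpace X] : Prop :=
  T0Space X ∧ ∀ 𝒦 : Set (Set X), 𝒦 ⊆ KSet X → FiltFam 𝒦 →
    ∀ U : Set X, IsOpen U → ⋂₀ 𝒦 ⊆ U → ∃ K ∈ 𝒦, K ⊆ U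

/-- Sober space: every irreducible closed subset is the closure of a unique point. -/
def IsSober (X : Type u) [TopologicalSpace X] : Prop :=
  ∀ A : Set X, IsIrreducible A → IsClosed A → ∃! x : X, A = closure {x}

/-- `V` is way below `U` in the lattice of open sets: every open cover of `U`
has a finite subfamily covering `V`. -/
def wayBelow [TopologicalSpace X] (V U : Set X) : Prop :=
  ∀ 𝒞 : Set (Set X), (∀ W ∈ 𝒞, IsOpen W) → U ⊆ ⋃₀ 𝒞 →
    ∃ 𝒟 ⊆ 𝒞, 𝒟.Finite ∧ V ⊆ ⋃₀ 𝒟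

/-- Core compact space. -/
def CoreCompact (X : Type u) [TopologicalSpace X] : Prop :=
  ∀ (x : X) (U : Set X), IsOpen U → x ∈ U →
    ∃ V : Set X, IsOpen V ∧ x ∈ V ∧ wayBelow V U

/-- The underlying type of the Smyth power space: nonempty compact saturated subsets. -/
abbrev KS (X : Type u) [TopologicalSpace X] : Type u :=
  {K : Set X // K.Nonempty ∧ IsCompact K ∧ IsSat K}

/-- The upper Vietoris topology on `KS X`, generated by the sets
`□U = {K | K ⊆ U}` for `U` open; this makes `KS X` the Smyth power space `P_S(X)`. -/
instance (X : Type u) [TopologicalSpace X] : TopologicalSpace (KS X) :=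
  TopologicalSpace.generateFrom
    {S | ∃ U : Set X, IsOpen U ∧ S = {K : KS X | (K : Set X) ⊆ U}}

/-- Rudin set: a nonempty closed set that is a minimal closed set meeting all
members of some filtered family of nonempty compact saturated sets. -/
def RudinSet [TopologicalSpace X] (A : Set X) : Prop :=
  IsClosed A ∧ A.Nonempty ∧ ∃ 𝒦 : Set (Set X), 𝒦 ⊆ KSet X ∧ FiltFam 𝒦 ∧
    (∀ K ∈ 𝒦, (K ∩ A).Nonempty) ∧
    ∀ B : Set X, IsClosed B → B ⊆ A → (∀ K ∈ 𝒦, (K ∩ B).Nonempty) → B = A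

/-- Well-filtered determined (WD) set. -/
def IsWDSet [TopologicalSpace X] (A : Set X) : Prop :=
  IsClosed A ∧ A.Nonempty ∧ ∀ (Y : Type u) [TopologicalSpace Y], IsWF Y →
    ∀ f : X → Y, Continuous f → ∃ y : Y, closure (f '' A) = closure {y}

/-- Rudin space: every irreducible closed set is a Rudin set. -/
def RudinSpace (X : Type u) [TopologicalSpace X] : Prop :=
  ∀ A : Set X, IsClosed A → IsIrreducible A → RudinSet A

/-- WD space: every irreducible closed set is a WD set. -/
def WDSpace (X : Type u) [TopologicalSpace X] : Prop :=
  ∀ A : Set X, IsClosed A → IsIrreducible A → IsWDSet A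

/-- DC space: every irreducible closed set is the closure of a directed set. -/
def DCSpace (X : Type u) [TopologicalSpace X] : Prop :=
  ∀ A : Set X, IsClosed A → IsIrreducible A → ∃ D : Set X, dirOn D ∧ A = closure D

section Helpers
variable [TopologicalSpace X]

lemma specLE_refl' (x : X) : specLE x x := subset_closure rfl

lemma specLE_trans' {x y z : X} (h1 : specLE x y) (h2 : specLE y z) : specLE x z :=
  (closure_minimal (Set.singleton_subset_iff.mpr h2) isClosed_closure) h1

lemma specLE_closure_subset {x y : X} (h : specLE x y) :
    closure ({x} : Set X) ⊆ closure {y} :=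
  closure_minimal (Set.singleton_subset_iff.mpr h) isClosed_closure

lemma mem_open_of_specLE {U : Set X} (hU : IsOpen U) {x y : X} (hx : x ∈ U)
    (h : specLE x y) : y ∈ U := by
  rcases mem_closure_iff.mp h U hU hx with ⟨z, hzU, hz⟩
  rwa [Set.mem_singleton_iff.mp hz] at hzU

lemma specLE_antisymm' [T0Space X] {x y : X} (h1 : specLE x y) (h2 : specLE y x) : x = y := by
  have hx : y ⤳ x := specializes_iff_mem_closure.mpr h1
  have hy : x ⤳ y := specializes_iff_mem_closure.mpr h2
  exact (hy.antisymm hx).eq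

lemma exists_min_below [T0Space X] {K : Set X} (hK : IsCompact K) {p : X} (hp : p ∈ K) :
    ∃ x ∈ K, specLE x p ∧ ∀ y ∈ K, specLE y x → y = x := by
  set S : Set (Set X) := {A | ∃ x, x ∈ K ∧ specLE x p ∧ A = closure {x}} with hSdef
  have hzorn : ∀ c ⊆ S, IsChain (· ⊆ ·) c → ∃ lb ∈ S, ∀ s ∈ c, lb ⊆ s := by
    intro c hcS hchain
    rcases c.eq_empty_or_nonempty with rfl | ⟨A₀, hA₀⟩
    · exact ⟨closure {p}, ⟨p, hp, specLE_refl' p, rfl⟩, by simp⟩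
    · have hclosed : ∀ A : c, IsClosed (A : Set X) := by
        rintro ⟨A, hA⟩
        obtain ⟨x, -, -, rfl⟩ := hcS hA
        exact isClosed_closure
      have hfin : ∀ u : Finset c, (K ∩ ⋂ A ∈ u, (A : Set X)).Nonempty := by
        intro u
        rcases u.eq_empty_or_nonempty with rfl | hu
        · simpa using ⟨p, hp⟩
        · obtain ⟨a, hau, hamin⟩ := u.exists_minimal hu
          have hleast : ∀ b ∈ u, (a : Set X) ⊆ (b : Set X) := by
            intro b hbu
            by_cases hab : (a : Set X) = (b : Set X)
            · exact hab.le
            · rcases hchain a.2 b.2 hab with h | h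
              · exact h
              · have hlt : (b : Set X) < (a : Set X) := lt_of_le_of_ne h (fun he => hab he.symm)
                exact absurd ((Subtype.coe_lt_coe.mp hlt).trans_le (hamin hbu (Subtype.coe_lt_coe.mp hlt).le)) (lt_irrefl _)
          obtain ⟨x, hxK, -, hax⟩ := hcS a.2
          refine ⟨x, hxK, ?_⟩
          simp only [Set.mem_iInter]
          intro b hbu
          exact hleast b hbu (hax ▸ subset_closure rfl)
      obtain ⟨z, hzK, hz⟩ := hK.inter_iInter_nonempty (fun A : c => (A : Set X)) hclosed hfin
      have hzmem : ∀ A ∈ c, z ∈ A := by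
        intro A hA
        exact Set.mem_iInter.mp hz ⟨A, hA⟩
      obtain ⟨x₀, hx₀K, hx₀p, hA₀eq⟩ := hcS hA₀
      have hzx₀ : specLE z x₀ := by
        have h := hzmem A₀ hA₀; rw [hA₀eq] at h; exact h
      have hzp : specLE z p := specLE_trans' hzx₀ hx₀p
      refine ⟨closure {z}, ⟨z, hzK, hzp, rfl⟩, ?_⟩
      intro A hA
      obtain ⟨x, -, -, rfl⟩ := hcS hA
      exact specLE_closure_subset (hzmem _ hA)
  obtain ⟨m, hm⟩ := zorn_superset S hzorn
  obtain ⟨x, hxK, hxp, rfl⟩ := hm.prop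
  refine ⟨x, hxK, hxp, fun y hyK hyx => ?_⟩
  have hyS : closure ({y} : Set X) ∈ S := ⟨y, hyK, specLE_trans' hyx hxp, rfl⟩
  have hsub := hm.eq_of_subset hyS (specLE_closure_subset hyx)
  have hxy : specLE x y := by
    show x ∈ closure ({y} : Set X)
    rw [hsub]; exact subset_closure rfl
  exact specLE_antisymm' hyx hxy

end Helpers

/-- if `X` is a first-countable T0 space in which `min K` is countable for
every nonempty compact saturated `K`, then the Smyth power space of `X` is
first-countable. -/
theorem stmt18 {X : Type u} [TopologicalSpace X] [T0Space X]
    [FirstCountableTopology X]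
    (hmin : ∀ K ∈ KSet X, ({x ∈ K | ∀ y ∈ K, specLE y x → y = x} : Set X).Countable) :
    FirstCountableTopology (KS X) := by
  refine ⟨fun K => ?_⟩
  obtain ⟨p₀, hp₀⟩ := K.2.1
  have hKcomp : IsCompact K.1 := K.2.2.1
  set M : Set X := {x ∈ K.1 | ∀ y ∈ K.1, specLE y x → y = x} with hM
  have hMne : M.Nonempty := by
    obtain ⟨x, hxK, -, hxmin⟩ := exists_min_below hKcomp hp₀
    exact ⟨x, hxK, hxmin⟩
  obtain ⟨f, hf⟩ := (hmin K.1 K.2).exists_eq_range hMne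
  have hMr : M = Set.range f := by rw [hM]; exact hf
  have hbase : ∀ x : X, ∃ V : ℕ → Set X, (∀ n, IsOpen (V n) ∧ x ∈ V n) ∧
      ∀ U : Set X, IsOpen U → x ∈ U → ∃ n, V n ⊆ U := by
    intro x
    obtain ⟨V, hV⟩ := (𝓝 x).exists_antitone_basis
    refine ⟨fun n => interior (V n), fun n =>
      ⟨isOpen_interior, mem_interior_iff_mem_nhds.mpr (hV.mem n)⟩, fun U hU hx => ?_⟩
    obtain ⟨n, -, hn⟩ := hV.toHasBasis.mem_iff.mp (hU.mem_nhds hx)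
    exact ⟨n, interior_subset.trans hn⟩
  choose W hW1 hW2 using fun i => hbase (f i)
  set UF : Finset (ℕ × ℕ) → Set X := fun F => ⋃ q ∈ F, W q.1 q.2 with hUF
  have hUFopen : ∀ F, IsOpen (UF F) := fun F =>
    isOpen_biUnion fun q _ => (hW1 q.1 q.2).1
  set Sub : Set (Set (KS X)) :=
    {S | ∃ U : Set X, IsOpen U ∧ S = {L : KS X | (L : Set X) ⊆ U}} with hSub
  have hnhds : 𝓝 K = ⨅ s ∈ {s | K ∈ s ∧ s ∈ Sub}, Filter.principal s :=
    TopologicalSpace.nhds_generateFrom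
  have h1 : (𝓝 K).HasBasis (fun s => s ∈ {s | K ∈ s ∧ s ∈ Sub}) id := by
    rw [hnhds]
    refine Filter.hasBasis_biInf_principal ?_ ?_
    · rintro s₁ ⟨hK1, U₁, hU₁, rfl⟩ s₂ ⟨hK2, U₂, hU₂, rfl⟩
      refine ⟨{L : KS X | (L : Set X) ⊆ U₁ ∩ U₂},
        ⟨Set.subset_inter hK1 hK2, U₁ ∩ U₂, hU₁.inter hU₂, rfl⟩,
        fun L hL => hL.trans Set.inter_subset_left,
        fun L hL => hL.trans Set.inter_subset_right⟩
    · exact ⟨{L : KS X | (L : Set X) ⊆ Set.univ},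
        ⟨Set.subset_univ _, Set.univ, isOpen_univ, rfl⟩⟩
  have h2 : (𝓝 K).HasBasis (fun F : Finset (ℕ × ℕ) => K.1 ⊆ UF F)
      (fun F => {L : KS X | (L : Set X) ⊆ UF F}) := by
    refine h1.to_hasBasis ?_ ?_
    · rintro s ⟨hKs, U, hU, rfl⟩
      have hKU : K.1 ⊆ U := hKs
      have hfiK : ∀ i : ℕ, f i ∈ K.1 := fun i => by
        have hfi : f i ∈ M := by rw [hMr]; exact Set.mem_range_self i
        exact hfi.1
      have hsel : ∀ i : ℕ, ∃ n, W i n ⊆ U := fun i => hW2 i U hU (hKU (hfiK i))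
      choose n hn using hsel
      have hcover : K.1 ⊆ ⋃ i, W i (n i) := by
        intro q hq
        obtain ⟨x, hxK, hxq, hxmin⟩ := exists_min_below hKcomp hq
        have hxM : x ∈ M := ⟨hxK, hxmin⟩
        rw [hMr] at hxM
        obtain ⟨i, rfl⟩ := hxM
        exact Set.mem_iUnion.mpr
          ⟨i, mem_open_of_specLE (hW1 i (n i)).1 (hW1 i (n i)).2 hxq⟩
      obtain ⟨s, hs⟩ := hKcomp.elim_finite_subcover (fun i => W i (n i))
        (fun i => (hW1 i (n i)).1) hcover
      refine ⟨s.image (fun i => (i, n i)), ?_, ?_⟩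
      · intro q hq
        obtain ⟨i, his, hqW⟩ := Set.mem_iUnion₂.mp (hs hq)
        exact Set.mem_biUnion (Finset.mem_image_of_mem _ his) hqW
      · intro L hL
        refine Set.mem_setOf.mpr (Set.Subset.trans hL ?_)
        intro q hq
        obtain ⟨r, hr, hqW⟩ := Set.mem_iUnion₂.mp hq
        obtain ⟨i, his, rfl⟩ := Finset.mem_image.mp hr
        exact hn i hqW
    · intro F hF
      exact ⟨{L : KS X | (L : Set X) ⊆ UF F},
        ⟨hF, UF F, hUFopen F, rfl⟩, subset_rfl⟩
  exact h2.isCountablyGenerated
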